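/- In a finite semimodular lattice L with join-irreducibles linearly ordered by a well-order ≺ extending the lattice order, the map assigning to each cover relation x ⋖ y the ≺-least join-irreducible z with x ∨ z = y is an EL-labeling of L. -/

import Mathlib

/-- An antichain cutset: a set intersecting each maximal chain in exactly one element. -/
def IsAntichainCutset {α : Type*} [PartialOrder α] (A : Set α) : Prop :=
  ∀ c : Set α, IsMaxChain (· ≤ ·) c → ∃! x, x ∈ c ∧ x ∈ A

/-- A poset is strongly connected if any two maximal chains are connected by a finite
sequence of maximal chains in which consecutive chains have symmetric difference of
cardinality two. -/
def StronglyConnectedOrder (α : Type*) [PartialOrder α] : Prop :=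
  ∀ c d : Set α, IsMaxChain (· ≤ ·) c → IsMaxChain (· ≤ ·) d →
    ∃ (n : ℕ) (f : ℕ → Set α), f 0 = c ∧ f n = d ∧
      (∀ i ≤ n, IsMaxChain (· ≤ ·) (f i)) ∧
      ∀ i < n, (symmDiff (f i) (f (i + 1))).ncard = 2

/-- The word of labels along a chain, listed as a list of elements. -/
def chainWord {α Λ : Type*} (l : α → α → Λ) (L : List α) : List Λ :=
  (L.zip L.tail).map fun p => l p.1 p.2

/-- A saturated chain from x to y: a list starting at x, ending at y, each step a cover. -/
def IsSaturatedChain {α : Type*} [PartialOrder α] (x y : α) (L : List α) : Prop :=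
  L.head? = some x ∧ L.getLast? = some y ∧ L.Chain' (· ⋖ ·)

/-- An EL-labeling (with labels compared by `le`, `lt`): on each interval [x,y] there is
a unique ascending maximal chain, which lexicographically strictly precedes every other
maximal chain of [x,y]. -/
def IsELLabeling {α Λ : Type*} [PartialOrder α] (le lt : Λ → Λ → Prop)
    (l : α → α → Λ) : Prop :=
  ∀ x y : α, x ≤ y →
    ∃ L : List α, IsSaturatedChain x y L ∧ (chainWord l L).Chain' le ∧
      ∀ M : List α, IsSaturatedChain x y M → M ≠ L →
        ¬ (chainWord l M).Chain' le ∧ List.Lex lt (chainWord l L) (chainWord l M)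

set_option linter.unusedSectionVars false

section Helpers

variable {α : Type*} [Lattice α] [Fintype α] [BoundedOrder α]

private lemma el_exists_supIrred {c x : α} (h : ¬ c ≤ x) :
    ∃ w : α, SupIrred w ∧ w ≤ c ∧ ¬ w ≤ x := by
  obtain ⟨w, hw, hmin⟩ := (Finite.to_wellFoundedLT (α := α)).wf.has_min
    {d : α | d ≤ c ∧ ¬ d ≤ x} ⟨c, le_refl c, h⟩
  refine ⟨w, ⟨fun hmw => hw.2 ((hmw bot_le).trans bot_le), ?_⟩, hw.1, hw.2⟩
  intro a b hab
  by_contra hcon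
  push_neg at hcon
  have ha : a < w := lt_of_le_of_ne (hab ▸ le_sup_left) hcon.1
  have hb : b < w := lt_of_le_of_ne (hab ▸ le_sup_right) hcon.2
  have hax : a ≤ x := by
    by_contra hax
    exact hmin a ⟨ha.le.trans hw.1, hax⟩ ha
  have hbx : b ≤ x := by
    by_contra hbx
    exact hmin b ⟨hb.le.trans hw.1, hbx⟩ hb
  exact hw.2 (hab ▸ sup_le hax hbx)

private lemma chainWord_cons2 {Λ : Type*} (l : α → α → Λ) (a b : α) (t : List α) :
    chainWord l (a :: b :: t) = l a b :: chainWord l (b :: t) := rfl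

private lemma sat_cases {x y : α} {M : List α} (h : IsSaturatedChain x y M) :
    (M = [x] ∧ x = y) ∨
      ∃ b t, M = x :: b :: t ∧ x ⋖ b ∧ IsSaturatedChain b y (b :: t) := by
  obtain ⟨h1, h2, h3⟩ := h
  match M with
  | [] => simp at h1
  | [a] =>
    simp at h1 h2
    subst h1
    exact Or.inl ⟨rfl, h2⟩
  | a :: b :: t =>
    simp at h1
    subst h1
    rw [List.getLast?_cons_cons] at h2
    rw [List.Chain', List.isChain_cons_cons] at h3
    exact Or.inr ⟨b, t, rfl, h3.1, rfl, h2, h3.2⟩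

private lemma sat_le {y : α} : ∀ (M : List α) (b : α), IsSaturatedChain b y M → b ≤ y := by
  intro M
  induction M with
  | nil => intro b h; exact absurd h.1 (by simp)
  | cons a t ih =>
    intro b h
    rcases sat_cases h with ⟨_, h2⟩ | ⟨c, t', hM, hcov, hsat⟩
    · exact h2.le
    · injection hM with h1 h2
      subst h1; subst h2
      exact hcov.le.trans (ih c hsat)

variable {lo : LinearOrder {a : α // SupIrred a}} {l : α → α → {a : α // SupIrred a}}

private lemma el_labels_bound
    (hl : ∀ x y : α, x ⋖ y → (x ⊔ (l x y : α) = y ∧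
      ∀ z : {a : α // SupIrred a}, x ⊔ (z : α) = y → lo.le (l x y) z)) :
    ∀ (M : List α) (b y : α), IsSaturatedChain b y M →
      ∀ w ∈ chainWord l M, (w : α) ≤ y ∧ ¬ (w : α) ≤ b := by
  intro M
  induction M with
  | nil => intro b y h; exact absurd h.1 (by simp)
  | cons a t ih =>
    intro b y h w hw
    rcases sat_cases h with ⟨hM, _⟩ | ⟨c, t', hM, hcov, hsat⟩
    · rw [hM] at hw; simp [chainWord] at hw
    · injection hM with h1 h2
      subst h1; subst h2
      rw [chainWord_cons2] at hw
      have hcy : c ≤ y := sat_le _ _ hsat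
      rcases List.mem_cons.mp hw with rfl | hw'
      · obtain ⟨hsup, _⟩ := hl a c hcov
        refine ⟨?_, ?_⟩
        · exact le_trans (le_trans le_sup_right hsup.le) hcy
        · intro hwb
          exact hcov.ne (by rw [← hsup, sup_eq_left.mpr hwb])
      · obtain ⟨h1, h2⟩ := ih c y hsat w hw'
        exact ⟨h1, fun hwb => h2 (hwb.trans hcov.le)⟩

private lemma el_firstLabel_le
    (hl : ∀ x y : α, x ⋖ y → (x ⊔ (l x y : α) = y ∧
      ∀ z : {a : α // SupIrred a}, x ⊔ (z : α) = y → lo.le (l x y) z)) :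
    ∀ (M : List α) (b y : α) (z : {a : α // SupIrred a}), IsSaturatedChain b y M →
      (z : α) ≤ y → ¬ (z : α) ≤ b → (chainWord l M).Chain' lo.le →
      ∃ w, (chainWord l M).head? = some w ∧ lo.le w z := by
  letI := lo
  intro M
  induction M with
  | nil => intro b y z h; exact absurd h.1 (by simp)
  | cons a t ih =>
    intro b y z h hzy hzb hchain
    rcases sat_cases h with ⟨hM, hby⟩ | ⟨c, t', hM, hcov, hsat⟩
    · exact absurd (hby ▸ hzy) hzb
    · injection hM with h1 h2
      subst h1; subst h2
      rw [chainWord_cons2] at hchain ⊢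
      by_cases hzc : (z : α) ≤ c
      · refine ⟨l a c, rfl, ?_⟩
        have h2' : a < a ⊔ (z : α) :=
          lt_of_le_of_ne le_sup_left (fun he => hzb (by rw [he]; exact le_sup_right))
        have hsup : a ⊔ (z : α) = c :=
          (sup_le hcov.le hzc).eq_of_not_lt (hcov.2 h2')
        exact (hl a c hcov).2 z hsup
      · obtain ⟨w, hw1, hw2⟩ := ih c y z hsat hzy hzc hchain.tail
        exact ⟨l a c, rfl, lo.le_trans _ _ _ (hchain.rel_head? hw1) hw2⟩

end Helpers

/-- In a finite semimodular lattice with join-irreducibles well-ordered compatibly with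
the lattice order, labeling each cover x ⋖ y by the least join-irreducible z with
x ⊔ z = y gives an EL-labeling. -/
theorem semimodular_minimal_joinIrreducible_is_ELLabeling {α : Type*} [Lattice α]
    [Fintype α] [BoundedOrder α]
    (hsm : ∀ x y : α, x ⊓ y ⋖ x → y ⋖ x ⊔ y)
    (lo : LinearOrder {a : α // SupIrred a})
    (hext : ∀ x y : {a : α // SupIrred a}, (x : α) < (y : α) → lo.lt x y)
    (l : α → α → {a : α // SupIrred a})
    (hl : ∀ x y : α, x ⋖ y → (x ⊔ (l x y : α) = y ∧
      ∀ z : {a : α // SupIrred a}, x ⊔ (z : α) = y → lo.le (l x y) z)) :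
    IsELLabeling lo.le lo.lt l := by
  letI := lo
  intro x y
  obtain ⟨n, hn⟩ : ∃ n, (Set.Icc x y).ncard ≤ n := ⟨_, le_refl _⟩
  revert x
  induction n with
  | zero =>
    intro x hn hxy
    rw [Nat.le_zero, Set.ncard_eq_zero (Set.toFinite _), Set.Icc_eq_empty_iff] at hn
    exact absurd hxy hn
  | succ n IH =>
    intro x hn hxy
    by_cases hxy' : x = y
    · subst hxy'
      refine ⟨[x], ⟨rfl, rfl, List.isChain_singleton x⟩, List.isChain_nil, ?_⟩
      intro M hM hMne
      rcases sat_cases hM with ⟨hM1, _⟩ | ⟨b, t, hM1, hcovM, hsatM⟩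
      · exact absurd hM1 hMne
      · exact absurd (sat_le _ _ hsatM) hcovM.lt.not_ge
    · have hyx : ¬ y ≤ x := fun h => hxy' (le_antisymm hxy h)
      have hSne : {z : {a : α // SupIrred a} | (z : α) ≤ y ∧ ¬ (z : α) ≤ x}.Nonempty := by
        obtain ⟨w, hw, h1, h2⟩ := el_exists_supIrred hyx
        exact ⟨⟨w, hw⟩, h1, h2⟩
      obtain ⟨z₁, hz₁S, hz₁min⟩ := Set.exists_min_image _ id (Set.toFinite _) hSne
      simp only [id] at hz₁min
      obtain ⟨hz₁y, hz₁x⟩ := hz₁S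
      have hstep : ∀ c : α, c < (z₁ : α) → c ≤ x := by
        intro c hc
        by_contra hcx
        obtain ⟨w, hw, hwc, hwx⟩ := el_exists_supIrred hcx
        have hlt := hext ⟨w, hw⟩ z₁ (lt_of_le_of_lt hwc hc)
        have hle := hz₁min ⟨w, hw⟩ ⟨le_trans hwc (le_trans hc.le hz₁y), hwx⟩
        exact ((lo.lt_iff_le_not_ge _ _).mp hlt).2 hle
      have hmeet : x ⊓ (z₁ : α) ⋖ (z₁ : α) := by
        refine ⟨lt_of_le_of_ne inf_le_right
          (fun he => hz₁x (by rw [← he]; exact inf_le_left)), ?_⟩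
        intro c hc1 hc2
        exact absurd (le_inf (hstep c hc2) hc2.le) hc1.not_ge
      have hcov : x ⋖ x ⊔ (z₁ : α) := by
        have := hsm (z₁ : α) x (by rwa [inf_comm ((z₁ : α)) x])
        rwa [sup_comm] at this
      have hx₁y : x ⊔ (z₁ : α) ≤ y := sup_le hxy hz₁y
      have hlabel : l x (x ⊔ (z₁ : α)) = z₁ := by
        obtain ⟨hsup, hmin'⟩ := hl x (x ⊔ (z₁ : α)) hcov
        refine lo.le_antisymm _ _ (hmin' z₁ rfl) (hz₁min (l x (x ⊔ (z₁ : α))) ⟨?_, ?_⟩)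
        · exact le_trans (le_trans le_sup_right (le_of_eq hsup)) hx₁y
        · exact fun hle => hcov.ne (by rw [← hsup, sup_eq_left.mpr hle])
      have hcard : (Set.Icc (x ⊔ (z₁ : α)) y).ncard ≤ n := by
        have hsub : Set.Icc (x ⊔ (z₁ : α)) y ⊂ Set.Icc x y := by
          refine ⟨Set.Icc_subset_Icc hcov.le le_rfl, fun hsub' => ?_⟩
          have hx : x ∈ Set.Icc x y := Set.mem_Icc.mpr ⟨le_rfl, hxy⟩
          have := Set.mem_Icc.mp (hsub' hx)
          exact absurd this.1 hcov.lt.not_ge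
        have := Set.ncard_lt_ncard hsub (Set.toFinite _)
        omega
      obtain ⟨L₁, hL₁sat, hL₁chain, hL₁uniq⟩ := IH (x ⊔ (z₁ : α)) hcard hx₁y
      obtain ⟨t, rfl⟩ : ∃ t, L₁ = (x ⊔ (z₁ : α)) :: t := by
        cases L₁ with
        | nil => exact absurd hL₁sat.1 (by simp)
        | cons a t =>
          have h := hL₁sat.1
          simp only [List.head?_cons, Option.some.injEq] at h
          subst h
          exact ⟨t, rfl⟩
      refine ⟨x :: (x ⊔ (z₁ : α)) :: t,
        ⟨rfl, by rw [List.getLast?_cons_cons]; exact hL₁sat.2.1,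
          List.isChain_cons_cons.mpr ⟨hcov, hL₁sat.2.2⟩⟩, ?_, ?_⟩
      · rw [chainWord_cons2, hlabel]
        refine List.isChain_cons.mpr ⟨?_, hL₁chain⟩
        intro w hw
        have hw' := List.mem_of_mem_head? hw
        obtain ⟨h1, h2⟩ := el_labels_bound hl _ _ _ hL₁sat w hw'
        exact hz₁min w ⟨h1, fun hle => h2 (le_trans hle le_sup_left)⟩
      · intro M hMsat hMne
        rcases sat_cases hMsat with ⟨_, h2⟩ | ⟨m₁, t', hM, hcovM, hsatM⟩
        · exact absurd h2 hxy'
        · subst hM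
          by_cases hm : m₁ = x ⊔ (z₁ : α)
          · subst hm
            have hne' : (x ⊔ (z₁ : α)) :: t' ≠ (x ⊔ (z₁ : α)) :: t :=
              fun h => hMne (by rw [h])
            obtain ⟨hnc, hlex⟩ := hL₁uniq ((x ⊔ (z₁ : α)) :: t') hsatM hne'
            constructor
            · intro hc
              rw [chainWord_cons2] at hc
              exact hnc hc.tail
            · rw [chainWord_cons2, chainWord_cons2, hlabel]
              exact List.Lex.cons hlex
          · obtain ⟨hsupM, hminM⟩ := hl x m₁ hcovM
            have hlne : l x m₁ ≠ z₁ := fun he => hm (by rw [← hsupM, he])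
            have hzle : lo.le z₁ (l x m₁) := by
              refine hz₁min _ ⟨?_, ?_⟩
              · exact le_trans (le_trans le_sup_right (le_of_eq hsupM)) (sat_le _ _ hsatM)
              · exact fun hle => hcovM.ne (by rw [← hsupM, sup_eq_left.mpr hle])
            have hzlt : lo.lt z₁ (l x m₁) := by
              rw [lo.lt_iff_le_not_ge]
              exact ⟨hzle, fun h => hlne (lo.le_antisymm _ _ h hzle)⟩
            constructor
            · intro hc
              obtain ⟨w, hw1, hw2⟩ := el_firstLabel_le hl _ _ _ z₁ hMsat hz₁y hz₁x hc
              rw [chainWord_cons2] at hw1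
              simp only [List.head?_cons, Option.some.injEq] at hw1
              rw [← hw1] at hw2
              exact ((lo.lt_iff_le_not_ge _ _).mp hzlt).2 hw2
            · rw [chainWord_cons2, chainWord_cons2, hlabel]
              exact List.Lex.rel hzlt
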